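/- arXiv:1002.3511 — 3 statements merged into one kernel-verified Lean document; each statement's English description precedes it below -/
import Mathlib

section
/- If a point p on the d-approximate boundary M is dominated by exactly k points of S, then there exists a segment of M whose left endpoint is dominated by at least k points of S, and a segment of M whose right endpoint is dominated by at most k points of S. -/
open scoped Classical

/-- `dominates p q` : point `p` dominates point `q`, i.e. `p.x ≥ q.x` and `p.y ≥ q.y`. -/
def dominates (p q : ℝ × ℝ) : Prop := q.1 ≤ p.1 ∧ q.2 ≤ p.2

/-- A horizontal segment of the staircase is encoded as `(start, end, y)`. -/
theorem stmt_0 (S : Finset (ℝ × ℝ)) (d : ℕ) (M : Finset (ℝ × ℝ × ℝ))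
    (hM : ∀ seg ∈ M, seg.1 ≤ seg.2.1)
    (p : ℝ × ℝ) (k : ℕ)
    (hon : ∃ seg ∈ M, seg.1 ≤ p.1 ∧ p.1 ≤ seg.2.1 ∧ p.2 = seg.2.2)
    (hk : (S.filter (fun q => dominates q p)).card = k) :
    (∃ seg ∈ M, k ≤ (S.filter (fun q => dominates q (seg.1, seg.2.2))).card) ∧
    (∃ seg ∈ M, (S.filter (fun q => dominates q (seg.2.1, seg.2.2))).card ≤ k) := by
  obtain ⟨seg, hseg, h1, h2, h3⟩ := hon
  subst hk
  constructor
  · refine ⟨seg, hseg, Finset.card_le_card (Finset.monotone_filter_right _ ?_)⟩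
    intro q _ hq
    exact ⟨le_trans h1 hq.1, h3 ▸ hq.2⟩
  · refine ⟨seg, hseg, Finset.card_le_card (Finset.monotone_filter_right _ ?_)⟩
    intro q _ hq
    exact ⟨le_trans h2 hq.1, h3 ▸ hq.2⟩
end

section
/- Let sets H_2, …, H_m of points satisfy: (i) |H_i| ≥ 2^{2i-1} for 2 ≤ i ≤ m-1; (ii) every point of H_{i+1} x-overlaps at most 2^{2i-2} points of H_i; (iii) at most 2^{2i-3} points of H_i x-overlap with H_{i-1}. Then no point of H_{i+1} x-overlaps with any point of H_{i-1}, for all 3 ≤ i ≤ m-1. -/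
open scoped Classical

/-- Logarithmic decomposition `H_2, …, H_m` of planar points with distinct `x`-coordinates.
A point `p` x-overlaps a point `q` if `p.x > q.x`.  Under conditions (i)–(iii) below,
no point of `H_{i+1}` x-overlaps with any point of `H_{i-1}` for `3 ≤ i ≤ m-1`. -/
theorem stmt_8 (m : ℕ) (H : ℕ → Finset (ℝ × ℝ))
    (hdisj : ∀ i j, 2 ≤ i → i ≤ m → 2 ≤ j → j ≤ m → i ≠ j → Disjoint (H i) (H j))
    (hxinj : ∀ i j, 2 ≤ i → i ≤ m → 2 ≤ j → j ≤ m →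
      ∀ p ∈ H i, ∀ q ∈ H j, p ≠ q → p.1 ≠ q.1)
    (h1 : ∀ i, 2 ≤ i → i ≤ m - 1 → 2 ^ (2 * i - 1) ≤ (H i).card)
    (h2 : ∀ i, 2 ≤ i → i + 1 ≤ m →
      ∀ p ∈ H (i + 1), ((H i).filter (fun q => q.1 < p.1)).card ≤ 2 ^ (2 * i - 2))
    (h3 : ∀ i, 3 ≤ i → i ≤ m →
      ((H i).filter (fun p => ∃ q ∈ H (i - 1), q.1 < p.1)).card ≤ 2 ^ (2 * i - 3)) :
    ∀ i, 3 ≤ i → i ≤ m - 1 → ∀ p ∈ H (i + 1), ∀ q ∈ H (i - 1), p.1 ≤ q.1 := by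
  intro i hi3 him p hp q hq
  by_contra hcon
  push_neg at hcon
  have hi2 : 2 ≤ i := by omega
  have him' : i + 1 ≤ m := by omega
  have hcard := h1 i hi2 (by omega)
  have hA := h2 i hi2 him' p hp
  have hB := h3 i hi3 (by omega)
  have hsub : H i ⊆ (H i).filter (fun r => r.1 < p.1) ∪
      (H i).filter (fun r => ∃ q' ∈ H (i - 1), q'.1 < r.1) := by
    intro x hx
    simp only [Finset.mem_union, Finset.mem_filter]
    rcases lt_or_ge x.1 p.1 with h' | h'
    · exact Or.inl ⟨hx, h'⟩
    · exact Or.inr ⟨hx, q, hq, lt_of_lt_of_le hcon h'⟩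
  have hle : (H i).card ≤ 2 ^ (2 * i - 2) + 2 ^ (2 * i - 3) :=
    le_trans (Finset.card_le_card hsub)
      (le_trans (Finset.card_union_le _ _) (Nat.add_le_add hA (by convert hB using 2; apply Finset.filter_congr_decidable)))
  have hkey : (2:ℕ) ^ (2 * i - 1) ≤ 2 ^ (2 * i - 2) + 2 ^ (2 * i - 3) :=
    le_trans hcard hle
  have e1 : 2 * i - 1 = (2 * i - 3) + 2 := by omega
  have e2 : 2 * i - 2 = (2 * i - 3) + 1 := by omega
  rw [e1, e2, pow_succ, pow_succ] at hkey
  have hK : 1 ≤ (2:ℕ) ^ (2 * i - 3) := Nat.one_le_two_pow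
  nlinarith [hK, hkey]
end

section
/- For a three-sided query [a,b] × (−∞, c] decomposed over a balanced tree: if node v has children v_1, …, v_t with consecutive intervals int(v_1), …, int(v_t) covering int(v), [a,b] ⊆ int(v) but [a,b] is not contained in any single int(v_i), a ∈ int(v_r−1) and b ∈ int(v_{q+1}) with int(v_j) ⊆ [a,b] for r ≤ j ≤ q, then every point p of S with p.x ∈ [a,b] and p.y ≤ c lies either in some S_{v_j} (r ≤ j ≤ q) with p.y ≤ c, or satisfies the dominance query (p.x ≥ a, p.y ≤ c) within S_{v_{r-1}}, or the dominance query (p.x ≤ b, p.y ≤ c) within S_{v_{q+1}}; and conversely all such points have p.x ∈ [a,b] and p.y ≤ c. -/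
open scoped Classical

/-- Decomposition of a three-sided query `[a,b] × (−∞, c]` over the children of a tree
node `v`.  The children have pairwise disjoint, consecutively ordered intervals
`int 0, …, int (t-1)` whose union covers `[a,b]`; `int j ⊆ [a,b]` for `r ≤ j ≤ q`,
`a ∈ int (r-1)` and `b ∈ int (q+1)`.  Then a point `p ∈ S` satisfies
`p.x ∈ [a,b] ∧ p.y ≤ c` iff it is caught by a middle child `S_{v_j}` (`r ≤ j ≤ q`) with
`p.y ≤ c`, or by the dominance query `p.x ≥ a ∧ p.y ≤ c` within `S_{v_{r-1}}`, or by the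
dominance query `p.x ≤ b ∧ p.y ≤ c` within `S_{v_{q+1}}`. -/
theorem stmt_18 (S : Finset (ℝ × ℝ))
    (hinj : Set.InjOn (fun p : ℝ × ℝ => p.1) ↑S)
    (t : ℕ) (int : Fin t → Set ℝ) (a b c : ℝ) (hab : a < b)
    (hdisj : ∀ i j : Fin t, i ≠ j → Disjoint (int i) (int j))
    (hord : ∀ i j : Fin t, i < j → ∀ x ∈ int i, ∀ y ∈ int j, x < y)
    (hcover : Set.Icc a b ⊆ ⋃ j, int j)
    (r q : Fin t) (hr0 : 0 < r.1) (hq1 : q.1 + 1 < t) (hrq : r ≤ q)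
    (hmid : ∀ j : Fin t, r ≤ j → j ≤ q → int j ⊆ Set.Icc a b)
    (hmidonly : ∀ j : Fin t, int j ⊆ Set.Icc a b → r ≤ j ∧ j ≤ q)
    (ha : a ∈ int ⟨r.1 - 1, lt_of_le_of_lt (Nat.sub_le _ _) r.2⟩)
    (hb : b ∈ int ⟨q.1 + 1, hq1⟩) :
    ∀ p ∈ S,
      ((a ≤ p.1 ∧ p.1 ≤ b ∧ p.2 ≤ c) ↔
        ((∃ j : Fin t, r ≤ j ∧ j ≤ q ∧ p.1 ∈ int j ∧ p.2 ≤ c) ∨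
          (p.1 ∈ int ⟨r.1 - 1, lt_of_le_of_lt (Nat.sub_le _ _) r.2⟩ ∧ a ≤ p.1 ∧ p.2 ≤ c) ∨
          (p.1 ∈ int ⟨q.1 + 1, hq1⟩ ∧ p.1 ≤ b ∧ p.2 ≤ c))) := by
  intro p _hp
  set r' : Fin t := ⟨r.1 - 1, lt_of_le_of_lt (Nat.sub_le _ _) r.2⟩ with hr'
  set q' : Fin t := ⟨q.1 + 1, hq1⟩ with hq'
  have hr'q' : r' < q' := by
    simp only [Fin.lt_def, hr', hq', Fin.val_mk]
    omega
  constructor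
  · rintro ⟨h1, h2, h3⟩
    obtain ⟨j, hj⟩ := Set.mem_iUnion.1 (hcover ⟨h1, h2⟩)
    rcases lt_or_ge j r with hjr | hjr
    · -- j = r'
      have hjle : j ≤ r' := by
        simp only [Fin.le_def, hr', hq', Fin.val_mk]
        have := Fin.lt_def.1 hjr
        omega
      have : j = r' := by
        rcases eq_or_lt_of_le hjle with h | h
        · exact h
        · exact absurd h1 (not_le.2 (hord j r' h _ hj _ ha))
      exact Or.inr (Or.inl ⟨this ▸ hj, h1, h3⟩)
    · rcases le_or_gt j q with hjq | hjq
      · exact Or.inl ⟨j, hjr, hjq, hj, h3⟩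
      · have hjge : q' ≤ j := by
          simp only [Fin.le_def, hr', hq', Fin.val_mk]
          have := Fin.lt_def.1 hjq
          omega
        have : j = q' := by
          rcases eq_or_lt_of_le hjge with h | h
          · exact h.symm
          · exact absurd h2 (not_le.2 (hord q' j h _ hb _ hj))
        exact Or.inr (Or.inr ⟨this ▸ hj, h2, h3⟩)
  · rintro (⟨j, hjr, hjq, hj, h3⟩ | ⟨hj, h1, h3⟩ | ⟨hj, h2, h3⟩)
    · obtain ⟨h1, h2⟩ := hmid j hjr hjq hj
      exact ⟨h1, h2, h3⟩
    · exact ⟨h1, le_of_lt (hord r' q' hr'q' _ hj _ hb), h3⟩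
    · exact ⟨le_of_lt (hord r' q' hr'q' _ ha _ hj), h2, h3⟩
end
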